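/- Let D ≥ 1, let ρ be a D×D complex density matrix, let F be a D×D positive semidefinite matrix with F ≤ I and p = Tr(Fρ) > 0, and let Ã_i = Σ_{k=1}^{K} a_k Π_k and Ã_j = Σ_{l=1}^{L} b_l Π'_l be Hermitian matrices with spectral gaps Δa = a_K − a_1 and Δb = b_L − b_1. Suppose the matrices ρ, F, Ã_i, Ã_j (equivalently, ρ, F and all the projections Π_k, Π'_l) pairwise commute. Then the postselected quantum Fisher information entry in Kirkwood–Dirac form satisfies |𝓘^{ps}_{ij}| ≤ Δa · Δb, where Q_{kl} = Tr(Π_k F Π'_l ρ)/p and 𝓘^{ps}_{ij} = 4 Re[Σ_{k,l} a_k b_l Q_{kl} − (Σ_{k,l} a_k Q_{kl})(Σ_{k,l} b_l Q_{kl})]. -/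

import Mathlib

open scoped ComplexOrder in
open Matrix in
lemma psd_trace_nonneg' {D : ℕ} {M : Matrix (Fin D) (Fin D) ℂ} (h : M.PosSemidef) :
    0 ≤ M.trace := by
  exact h.trace_nonneg

open scoped ComplexOrder MatrixOrder in
open Matrix in
lemma trace_key {D : ℕ} (ρ F P R : Matrix (Fin D) (Fin D) ℂ)
    (hρ : ρ.PosSemidef) (hF : F.PosSemidef)
    (hPh : Pᴴ = P) (hPi : P * P = P) (hRh : Rᴴ = R) (hRi : R * R = R)
    (hFP : Commute F P) (hFR : Commute F R) (hPR : Commute P R) :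
    0 ≤ (P * F * R * ρ).trace := by
  set r := CFC.sqrt ρ with hrdef
  have hr : rᴴ = r := (Matrix.nonneg_iff_posSemidef.mp (CFC.sqrt_nonneg ρ)).1
  have hrr : r * r = ρ := CFC.sqrt_mul_sqrt_self ρ (Matrix.nonneg_iff_posSemidef.mpr hρ)
  set S := P * R with hSdef
  have hSh : Sᴴ = S := by
    rw [hSdef, conjTranspose_mul, hPh, hRh]; exact hPR.eq.symm
  have hSS : S * S = S := by
    calc P * R * (P * R) = P * (R * P) * R := by simp only [mul_assoc]
      _ = P * (P * R) * R := by rw [← hPR.eq]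
      _ = (P * P) * (R * R) := by simp only [mul_assoc]
      _ = P * R := by rw [hPi, hRi]
  have hFS : Commute F S := hFP.mul_right hFR
  have key : P * F * R * ρ = S * F * ρ := by
    have h1 : P * F * R = P * R * F := by
      rw [mul_assoc, hFR.eq, ← mul_assoc]
    rw [h1]
  have h2 : (r * S) * F * (r * S)ᴴ = r * (S * F) * r := by
    rw [conjTranspose_mul, hSh, hr]
    calc r * S * F * (S * r) = r * (S * (F * S)) * r := by simp only [mul_assoc]
      _ = r * (S * (S * F)) * r := by rw [hFS.eq]
      _ = r * ((S * S) * F) * r := by rw [← mul_assoc S S F]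
      _ = r * (S * F) * r := by rw [hSS]
  have tr_eq : (S * F * ρ).trace = ((r * S) * F * (r * S)ᴴ).trace := by
    rw [h2, Matrix.trace_mul_comm (r * (S * F)) r]
    have : r * (r * (S * F)) = ρ * (S * F) := by rw [← mul_assoc, hrr]
    rw [this, Matrix.trace_mul_comm ρ (S * F)]
  rw [key, tr_eq]
  exact psd_trace_nonneg' (hF.mul_mul_conjTranspose_same _)

lemma var_bound {ι : Type*} [Fintype ι] (w x : ι → ℝ) (hw : ∀ i, 0 ≤ w i)
    (hsum : ∑ i, w i = 1) (m M : ℝ) (hx1 : ∀ i, m ≤ x i) (hx2 : ∀ i, x i ≤ M) :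
    ∑ i, w i * (x i - ∑ j, w j * x j) ^ 2 ≤ ((M - m) / 2) ^ 2 := by
  set μ := ∑ j, w j * x j with hμ
  set c := (M + m) / 2 with hc
  have key : ∑ i, w i * (x i - μ) ^ 2
      = ∑ i, w i * (x i - c) ^ 2 - (2 * (μ - c)) * (∑ i, w i * x i)
        + (μ ^ 2 - c ^ 2) * (∑ i, w i) := by
    have e : ∀ i, w i * (x i - μ) ^ 2
        = w i * (x i - c) ^ 2 - (2 * (μ - c)) * (w i * x i) + (μ ^ 2 - c ^ 2) * w i :=
      fun i => by ring
    simp only [e, Finset.sum_add_distrib, Finset.sum_sub_distrib, ← Finset.mul_sum]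
  rw [key, hsum, ← hμ]
  have h2 : ∑ i, w i * (x i - c) ^ 2 ≤ ((M - m) / 2) ^ 2 := by
    calc ∑ i, w i * (x i - c) ^ 2 ≤ ∑ i, w i * ((M - m) / 2) ^ 2 := by
          refine Finset.sum_le_sum fun i _ => ?_
          refine mul_le_mul_of_nonneg_left ?_ (hw i)
          refine sq_le_sq' ?_ ?_
          · have := hx1 i; simp only [hc]; linarith
          · have := hx2 i; simp only [hc]; linarith
      _ = ((M - m) / 2) ^ 2 := by rw [← Finset.sum_mul, hsum, one_mul]
  nlinarith [sq_nonneg (μ - c)]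

lemma cov_bound {ι : Type*} [Fintype ι] (w x y : ι → ℝ) (hw : ∀ i, 0 ≤ w i)
    (hsum : ∑ i, w i = 1) (mx Mx my My : ℝ)
    (hx1 : ∀ i, mx ≤ x i) (hx2 : ∀ i, x i ≤ Mx)
    (hy1 : ∀ i, my ≤ y i) (hy2 : ∀ i, y i ≤ My) :
    |∑ i, w i * (x i * y i) - (∑ i, w i * x i) * (∑ i, w i * y i)|
      ≤ (Mx - mx) * (My - my) / 4 := by
  have hne : Nonempty ι := by
    by_contra h
    rw [not_nonempty_iff] at h
    simp [Finset.univ_eq_empty] at hsum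
  obtain ⟨i0⟩ := hne
  have hMx : 0 ≤ Mx - mx := by have := (hx1 i0).trans (hx2 i0); linarith
  have hMy : 0 ≤ My - my := by have := (hy1 i0).trans (hy2 i0); linarith
  set μx := ∑ i, w i * x i with hμx
  set μy := ∑ i, w i * y i with hμy
  have hcov : ∑ i, w i * (x i * y i) - μx * μy
      = ∑ i, w i * ((x i - μx) * (y i - μy)) := by
    have expand : ∀ i, w i * ((x i - μx) * (y i - μy))
        = w i * (x i * y i) - μy * (w i * x i) - μx * (w i * y i) + μx * μy * w i := by
      intro i; ring
    rw [Finset.sum_congr rfl fun i _ => expand i]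
    rw [Finset.sum_add_distrib, Finset.sum_sub_distrib, Finset.sum_sub_distrib,
      ← Finset.mul_sum, ← Finset.mul_sum, ← Finset.mul_sum, hsum, ← hμx, ← hμy]
    ring
  rw [hcov]
  have cs := Finset.sum_mul_sq_le_sq_mul_sq Finset.univ
    (fun i => Real.sqrt (w i) * (x i - μx)) (fun i => Real.sqrt (w i) * (y i - μy))
  have e1 : ∀ i, (Real.sqrt (w i) * (x i - μx)) * (Real.sqrt (w i) * (y i - μy))
      = w i * ((x i - μx) * (y i - μy)) := by
    intro i
    rw [show (Real.sqrt (w i) * (x i - μx)) * (Real.sqrt (w i) * (y i - μy))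
        = (Real.sqrt (w i) * Real.sqrt (w i)) * ((x i - μx) * (y i - μy)) from by ring,
      Real.mul_self_sqrt (hw i)]
  have e2 : ∀ i, (Real.sqrt (w i) * (x i - μx)) ^ 2 = w i * (x i - μx) ^ 2 := by
    intro i; rw [mul_pow, Real.sq_sqrt (hw i)]
  have e3 : ∀ i, (Real.sqrt (w i) * (y i - μy)) ^ 2 = w i * (y i - μy) ^ 2 := by
    intro i; rw [mul_pow, Real.sq_sqrt (hw i)]
  rw [Finset.sum_congr rfl fun i _ => e1 i, Finset.sum_congr rfl fun i _ => e2 i,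
    Finset.sum_congr rfl fun i _ => e3 i] at cs
  have vx := var_bound w x hw hsum mx Mx hx1 hx2
  have vy := var_bound w y hw hsum my My hy1 hy2
  have hvy0 : 0 ≤ ∑ i, w i * (y i - μy) ^ 2 :=
    Finset.sum_nonneg fun i _ => mul_nonneg (hw i) (sq_nonneg _)
  have hsq : (∑ i, w i * ((x i - μx) * (y i - μy))) ^ 2
      ≤ ((Mx - mx) * (My - my) / 4) ^ 2 := by
    calc (∑ i, w i * ((x i - μx) * (y i - μy))) ^ 2
        ≤ (∑ i, w i * (x i - μx) ^ 2) * ∑ i, w i * (y i - μy) ^ 2 := cs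
      _ ≤ ((Mx - mx) / 2) ^ 2 * ((My - my) / 2) ^ 2 := by
          exact mul_le_mul vx vy hvy0 (sq_nonneg _)
      _ = ((Mx - mx) * (My - my) / 4) ^ 2 := by ring
  have h4 : (0:ℝ) ≤ (Mx - mx) * (My - my) / 4 := by positivity
  exact abs_le_of_sq_le_sq hsq h4

open scoped ComplexOrder in
open Matrix Finset in
/-- **Corollary 1.** In a classically commuting theory (all relevant operators pairwise
commute), the postselected quantum Fisher information entry in Kirkwood–Dirac form is
bounded by the product of the spectral gaps: |𝓘^{ps}_{ij}| ≤ Δa · Δb. -/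
theorem commuting_psqfim_bounded
    (D K L : ℕ) (hD : 1 ≤ D)
    (ρ F : Matrix (Fin D) (Fin D) ℂ)
    (hρ : ρ.PosSemidef) (hρtr : ρ.trace = 1)
    (hF : F.PosSemidef) (hFle : (1 - F).PosSemidef)
    (p : ℝ) (hp : 0 < p) (hpdef : (F * ρ).trace = (p : ℂ))
    (a : Fin (K + 1) → ℝ) (b : Fin (L + 1) → ℝ)
    (ha : Monotone a) (hb : Monotone b)
    (Pi_ : Fin (K + 1) → Matrix (Fin D) (Fin D) ℂ)
    (Pj : Fin (L + 1) → Matrix (Fin D) (Fin D) ℂ)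
    (hPi_herm : ∀ k, (Pi_ k)ᴴ = Pi_ k)
    (hPi_idem : ∀ k, Pi_ k * Pi_ k = Pi_ k)
    (hPi_orth : ∀ k k', k ≠ k' → Pi_ k * Pi_ k' = 0)
    (hPi_sum : ∑ k, Pi_ k = 1)
    (hPjherm : ∀ l, (Pj l)ᴴ = Pj l)
    (hPjidem : ∀ l, Pj l * Pj l = Pj l)
    (hPjorth : ∀ l l', l ≠ l' → Pj l * Pj l' = 0)
    (hPjsum : ∑ l, Pj l = 1)
    -- pairwise commutation of ρ, F and all the projections
    (hρF : Commute ρ F)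
    (hρPi : ∀ k, Commute ρ (Pi_ k)) (hρPj : ∀ l, Commute ρ (Pj l))
    (hFPi : ∀ k, Commute F (Pi_ k)) (hFPj : ∀ l, Commute F (Pj l))
    (hPiPj : ∀ k l, Commute (Pi_ k) (Pj l))
    -- conditional Kirkwood–Dirac quasiprobabilities
    (Q : Fin (K + 1) → Fin (L + 1) → ℂ)
    (hQ : ∀ k l, Q k l = (Pi_ k * F * Pj l * ρ).trace / (p : ℂ))
    -- spectral gaps
    (Δa Δb : ℝ)
    (hΔa : Δa = a (Fin.last K) - a 0) (hΔb : Δb = b (Fin.last L) - b 0)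
    -- postselected QFIM entry in Kirkwood–Dirac form
    (𝓘ps : ℝ)
    (h𝓘 : 𝓘ps = 4 * ((∑ k, ∑ l, (a k : ℂ) * (b l : ℂ) * Q k l -
        (∑ k, ∑ l, (a k : ℂ) * Q k l) * (∑ k, ∑ l, (b l : ℂ) * Q k l)).re)) :
    |𝓘ps| ≤ Δa * Δb := by
  have hT : ∀ k l, 0 ≤ (Pi_ k * F * Pj l * ρ).trace := fun k l =>
    trace_key ρ F (Pi_ k) (Pj l) hρ hF (hPi_herm k) (hPi_idem k) (hPjherm l) (hPjidem l)
      (hFPi k) (hFPj l) (hPiPj k l)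
  have hre : ∀ k l, 0 ≤ ((Pi_ k * F * Pj l * ρ).trace).re := by
    intro k l
    have := (Complex.le_def.mp (hT k l)).1
    simpa using this
  have him : ∀ k l, ((Pi_ k * F * Pj l * ρ).trace).im = 0 := by
    intro k l
    have := (Complex.le_def.mp (hT k l)).2
    simpa using this.symm
  set w : Fin (K + 1) → Fin (L + 1) → ℝ :=
    fun k l => ((Pi_ k * F * Pj l * ρ).trace).re / p with hwdef
  have hwnn : ∀ k l, 0 ≤ w k l := fun k l => div_nonneg (hre k l) hp.le
  have htr_eq : ∀ k l, (Pi_ k * F * Pj l * ρ).trace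
      = ((((Pi_ k * F * Pj l * ρ).trace).re : ℝ) : ℂ) := by
    intro k l
    apply Complex.ext <;> simp [him k l]
  have hQw : ∀ k l, Q k l = ((w k l : ℝ) : ℂ) := by
    intro k l
    rw [hQ k l, htr_eq k l, hwdef]
    push_cast
    ring
  -- sum of the (unnormalized) quasiprobabilities
  have hMsum : ∑ k, ∑ l, (Pi_ k * F * Pj l * ρ) = F * ρ := by
    have h1 : ∀ k, ∑ l, Pi_ k * F * Pj l * ρ = Pi_ k * F * ρ := by
      intro k
      calc ∑ l, Pi_ k * F * Pj l * ρ = (∑ l, Pi_ k * F * Pj l) * ρ := by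
            rw [Finset.sum_mul]
        _ = (Pi_ k * F * ∑ l, Pj l) * ρ := by rw [Finset.mul_sum]
        _ = Pi_ k * F * ρ := by rw [hPjsum, mul_one]
    rw [Finset.sum_congr rfl fun k _ => h1 k]
    calc ∑ k, Pi_ k * F * ρ = (∑ k, Pi_ k) * F * ρ := by
          rw [Finset.sum_mul, Finset.sum_mul]
      _ = F * ρ := by rw [hPi_sum, one_mul]
  have htrsum : ∑ k, ∑ l, (Pi_ k * F * Pj l * ρ).trace = (p : ℂ) := by
    have : ∑ k, ∑ l, (Pi_ k * F * Pj l * ρ).trace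
        = (∑ k, ∑ l, Pi_ k * F * Pj l * ρ).trace := by
      simp [Matrix.trace_sum]
    rw [this, hMsum, hpdef]
  have hwsum : ∑ k, ∑ l, w k l = 1 := by
    have hres : ∑ k, ∑ l, ((Pi_ k * F * Pj l * ρ).trace).re = p := by
      have := congrArg Complex.re htrsum
      simpa [Complex.re_sum] using this
    simp only [hwdef, ← Finset.sum_div]
    rw [hres, div_self hp.ne']
  -- rewrite the complex sums as real sums
  have c1 : ∑ k, ∑ l, (a k : ℂ) * (b l : ℂ) * Q k l
      = ((∑ k, ∑ l, a k * b l * w k l : ℝ) : ℂ) := by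
    simp only [hQw]
    push_cast
    ring
  have c2 : ∑ k, ∑ l, (a k : ℂ) * Q k l = ((∑ k, ∑ l, a k * w k l : ℝ) : ℂ) := by
    simp only [hQw]
    push_cast
    ring
  have c3 : ∑ k, ∑ l, (b l : ℂ) * Q k l = ((∑ k, ∑ l, b l * w k l : ℝ) : ℂ) := by
    simp only [hQw]
    push_cast
    ring
  have h𝓘' : 𝓘ps = 4 * ((∑ k, ∑ l, a k * b l * w k l)
      - (∑ k, ∑ l, a k * w k l) * (∑ k, ∑ l, b l * w k l)) := by
    rw [h𝓘, c1, c2, c3, ← Complex.ofReal_mul, ← Complex.ofReal_sub, Complex.ofReal_re]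
  -- apply the covariance bound over the product index type
  have hcov := cov_bound (fun i : Fin (K + 1) × Fin (L + 1) => w i.1 i.2)
    (fun i => a i.1) (fun i => b i.2) (fun i => hwnn i.1 i.2)
    (by rw [Fintype.sum_prod_type]; exact hwsum)
    (a 0) (a (Fin.last K)) (b 0) (b (Fin.last L))
    (fun i => ha (Fin.zero_le _)) (fun i => ha (Fin.le_last _))
    (fun i => hb (Fin.zero_le _)) (fun i => hb (Fin.le_last _))
  have eab : (∑ i : Fin (K + 1) × Fin (L + 1), w i.1 i.2 * (a i.1 * b i.2))
      = ∑ k, ∑ l, a k * b l * w k l := by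
    rw [Fintype.sum_prod_type]
    exact Finset.sum_congr rfl fun k _ => Finset.sum_congr rfl fun l _ => by ring
  have ea : (∑ i : Fin (K + 1) × Fin (L + 1), w i.1 i.2 * a i.1)
      = ∑ k, ∑ l, a k * w k l := by
    rw [Fintype.sum_prod_type]
    exact Finset.sum_congr rfl fun k _ => Finset.sum_congr rfl fun l _ => by ring
  have eb : (∑ i : Fin (K + 1) × Fin (L + 1), w i.1 i.2 * b i.2)
      = ∑ k, ∑ l, b l * w k l := by
    rw [Fintype.sum_prod_type]
    exact Finset.sum_congr rfl fun k _ => Finset.sum_congr rfl fun l _ => by ring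
  rw [eab, ea, eb] at hcov
  rw [h𝓘', hΔa, hΔb, abs_mul, abs_of_nonneg (by norm_num : (0:ℝ) ≤ 4)]
  calc 4 * |(∑ k, ∑ l, a k * b l * w k l)
      - (∑ k, ∑ l, a k * w k l) * (∑ k, ∑ l, b l * w k l)|
      ≤ 4 * ((a (Fin.last K) - a 0) * (b (Fin.last L) - b 0) / 4) := by linarith [hcov]
    _ = (a (Fin.last K) - a 0) * (b (Fin.last L) - b 0) := by ring
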